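/- For all natural numbers n, p ∈ [0,1] and k, the partial sum of the binomial distribution satisfies ∑_{j=k}^{n} C(n,j) p^j (1-p)^{n-j} ≤ (np)^k · ∑_{j=0}^{∞} 1/j!. -/
import Mathlib


/-- For all natural numbers `n`, `p ∈ [0,1]` and `k`, the partial sum of the binomial
distribution satisfies `∑_{j=k}^{n} C(n,j) p^j (1-p)^{n-j} ≤ (np)^k · ∑_{j=0}^{∞} 1/j!`. -/
theorem binomial_tail_le_tsum (n : ℕ) (p : ℝ) (hp0 : 0 ≤ p) (hp1 : p ≤ 1) (k : ℕ) :
    ∑ j ∈ Finset.Icc k n, (n.choose j : ℝ) * p ^ j * (1 - p) ^ (n - j)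
      ≤ ((n : ℝ) * p) ^ k * ∑' j : ℕ, (1 : ℝ) / (Nat.factorial j) := by
  have hq0 : (0:ℝ) ≤ 1 - p := by linarith
  have hsummable : Summable (fun j : ℕ => (1:ℝ) / (Nat.factorial j)) := by
    simpa using Real.summable_pow_div_factorial 1
  have htsum_ge : (1:ℝ) ≤ ∑' j : ℕ, (1:ℝ) / (Nat.factorial j) := by
    have := Summable.sum_le_tsum {0} (fun i _ => by positivity) hsummable
    simpa using this
  have hnonneg : ∀ j ∈ Finset.Icc k n,
      0 ≤ (n.choose j : ℝ) * p ^ j * (1 - p) ^ (n - j) := fun j _ => by positivity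
  rcases le_or_gt ((n:ℝ) * p) 1 with hnp | hnp
  · -- np ≤ 1 : termwise bound (np)^j/j! ≤ (np)^k/j!
    have step : ∀ j ∈ Finset.Icc k n,
        (n.choose j : ℝ) * p ^ j * (1 - p) ^ (n - j)
          ≤ ((n:ℝ) * p) ^ k * (1 / (Nat.factorial j)) := by
      intro j hj
      rw [Finset.mem_Icc] at hj
      have h1 : (n.choose j : ℝ) * p ^ j * (1 - p) ^ (n - j)
          ≤ (n.choose j : ℝ) * p ^ j := by
        have := pow_le_one₀ hq0 (by linarith : (1:ℝ) - p ≤ 1) (n := n - j)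
        nlinarith [mul_nonneg (Nat.cast_nonneg (n.choose j) : (0:ℝ) ≤ _) (pow_nonneg hp0 j)]
      have h2 : (n.choose j : ℝ) * p ^ j ≤ ((n:ℝ) * p) ^ j / (Nat.factorial j) := by
        have hc : (n.choose j : ℝ) ≤ (n:ℝ) ^ j / (Nat.factorial j) := by
          simpa using Nat.choose_le_pow_div j n (α := ℝ)
        have := mul_le_mul_of_nonneg_right hc (pow_nonneg hp0 j)
        calc (n.choose j : ℝ) * p ^ j ≤ (n:ℝ) ^ j / (Nat.factorial j) * p ^ j := this
          _ = ((n:ℝ) * p) ^ j / (Nat.factorial j) := by rw [mul_pow]; ring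
      have h3 : ((n:ℝ) * p) ^ j ≤ ((n:ℝ) * p) ^ k :=
        pow_le_pow_of_le_one (by positivity) hnp hj.1
      have h4 : ((n:ℝ) * p) ^ j / (Nat.factorial j) ≤ ((n:ℝ) * p) ^ k / (Nat.factorial j) := by
        have hf : (0:ℝ) < (Nat.factorial j : ℝ) := by positivity
        exact div_le_div_of_nonneg_right h3 hf.le
      calc (n.choose j : ℝ) * p ^ j * (1 - p) ^ (n - j) ≤ ((n:ℝ) * p) ^ j / (Nat.factorial j) :=
            h1.trans h2
        _ ≤ ((n:ℝ) * p) ^ k / (Nat.factorial j) := h4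
        _ = ((n:ℝ) * p) ^ k * (1 / (Nat.factorial j)) := by ring
    calc ∑ j ∈ Finset.Icc k n, (n.choose j : ℝ) * p ^ j * (1 - p) ^ (n - j)
        ≤ ∑ j ∈ Finset.Icc k n, ((n:ℝ) * p) ^ k * (1 / (Nat.factorial j)) :=
          Finset.sum_le_sum step
      _ = ((n:ℝ) * p) ^ k * ∑ j ∈ Finset.Icc k n, (1 / (Nat.factorial j) : ℝ) := by
          rw [Finset.mul_sum]
      _ ≤ ((n:ℝ) * p) ^ k * ∑' j : ℕ, (1:ℝ) / (Nat.factorial j) := by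
          apply mul_le_mul_of_nonneg_left _ (by positivity)
          exact Summable.sum_le_tsum _ (fun i _ => by positivity) hsummable
  · -- np > 1 : LHS ≤ 1 ≤ (np)^k * tsum
    have hfull : ∑ j ∈ Finset.range (n+1), (n.choose j : ℝ) * p ^ j * (1 - p) ^ (n - j)
        = 1 := by
      have h := (add_pow p (1 - p) n).symm
      have : ∑ j ∈ Finset.range (n+1), p ^ j * (1 - p) ^ (n - j) * (n.choose j : ℝ)
          = (p + (1 - p)) ^ n := h
      calc ∑ j ∈ Finset.range (n+1), (n.choose j : ℝ) * p ^ j * (1 - p) ^ (n - j)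
          = ∑ j ∈ Finset.range (n+1), p ^ j * (1 - p) ^ (n - j) * (n.choose j : ℝ) := by
            apply Finset.sum_congr rfl; intros; ring
        _ = (p + (1 - p)) ^ n := this
        _ = 1 := by norm_num
    have hle1 : ∑ j ∈ Finset.Icc k n, (n.choose j : ℝ) * p ^ j * (1 - p) ^ (n - j) ≤ 1 := by
      calc ∑ j ∈ Finset.Icc k n, (n.choose j : ℝ) * p ^ j * (1 - p) ^ (n - j)
          ≤ ∑ j ∈ Finset.range (n+1), (n.choose j : ℝ) * p ^ j * (1 - p) ^ (n - j) := by
            apply Finset.sum_le_sum_of_subset_of_nonneg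
            · intro j hj
              rw [Finset.mem_Icc] at hj
              rw [Finset.mem_range]; omega
            · intro j _ _; positivity
        _ = 1 := hfull
    have hk : (1:ℝ) ≤ ((n:ℝ) * p) ^ k := one_le_pow₀ hnp.le
    calc ∑ j ∈ Finset.Icc k n, (n.choose j : ℝ) * p ^ j * (1 - p) ^ (n - j) ≤ 1 := hle1
      _ ≤ ((n:ℝ) * p) ^ k * ∑' j : ℕ, (1:ℝ) / (Nat.factorial j) := by nlinarith
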